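/- For fixed N ≥ 1, c > 0 (with c = |h_w|²/σ_w²), define ζ*(P) = 1 - γ(N, N(1 + 1/(cP)) ln(cP+1))/Γ(N) + γ(N, (N/(cP)) ln(cP+1))/Γ(N) for P > 0. Then lim_{P→0⁺} ζ*(P) = 1 and lim_{P→0⁺} dζ*/dP = -c · Nᴺ e^{-N}/Γ(N). -/

import Mathlib

open Real Filter Set Topology

noncomputable def lowerGamma (s x : ℝ) : ℝ := ∫ t in (0:ℝ)..x, Real.exp (-t) * t ^ (s - 1)

section helpers
lemma lowerGamma_nat (N : ℕ) (hN : 1 ≤ N) (x : ℝ) :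
    lowerGamma N x = ∫ t in (0:ℝ)..x, Real.exp (-t) * t ^ (N - 1) := by
  unfold lowerGamma
  have h : ((N:ℝ) - 1) = ((N - 1 : ℕ) : ℝ) := by
    rw [Nat.cast_sub hN]; norm_num
  simp_rw [h, Real.rpow_natCast]

lemma cont_g (N : ℕ) : Continuous (fun t : ℝ => Real.exp (-t) * t ^ (N - 1)) := by
  fun_prop

lemma hasDerivAt_lowerGamma (N : ℕ) (hN : 1 ≤ N) (x : ℝ) :
    HasDerivAt (fun y => lowerGamma N y) (Real.exp (-x) * x ^ (N - 1)) x := by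
  have h := intervalIntegral.integral_hasDerivAt_right
    ((cont_g N).intervalIntegrable 0 x)
    ((cont_g N).aestronglyMeasurable.stronglyMeasurableAtFilter)
    (cont_g N).continuousAt
  exact h.congr_of_eventuallyEq (by filter_upwards with y using (lowerGamma_nat N hN y))
end helpers


lemma L0 : Tendsto (fun u : ℝ => Real.log (u + 1) / u) (𝓝[>] 0) (𝓝 1) := by
  have hd : HasDerivAt (fun u : ℝ => Real.log (u + 1)) 1 0 := by
    have h0 : HasDerivAt Real.log 1⁻¹ ((0:ℝ) + 1) := by
      simpa using Real.hasDerivAt_log (by norm_num : (1:ℝ) ≠ 0)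
    have := h0.comp 0 ((hasDerivAt_id (0:ℝ)).add_const 1)
    simpa [Function.comp_def] using this
  have := hasDerivAt_iff_tendsto_slope.mp hd
  have h2 : Tendsto (slope (fun u : ℝ => Real.log (u + 1)) 0) (𝓝[>] 0) (𝓝 1) :=
    this.mono_left (nhdsWithin_mono _ (by intro x hx; exact ne_of_gt hx))
  refine h2.congr' ?_
  filter_upwards [self_mem_nhdsWithin] with u hu
  simp [slope, hu, div_eq_inv_mul]

lemma L1 : Tendsto (fun u : ℝ => (u - Real.log (u + 1)) / u ^ 2) (𝓝[>] 0) (𝓝 (1/2)) := by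
  apply HasDerivAt.lhopital_zero_nhdsGT (f' := fun u => 1 - 1/(u+1)) (g' := fun u => 2*u)
  · filter_upwards [self_mem_nhdsWithin] with u (hu : 0 < u)
    have h1 : HasDerivAt (fun u : ℝ => Real.log (u + 1)) (1/(u+1)) u := by
      have := (Real.hasDerivAt_log (by positivity : u+1 ≠ 0)).comp u
        ((hasDerivAt_id u).add_const 1)
      simpa [one_div, Function.comp_def] using this
    simpa [Pi.sub_def] using (hasDerivAt_id u).sub h1
  · filter_upwards with u
    simpa [mul_comm] using hasDerivAt_pow 2 u
  · filter_upwards [self_mem_nhdsWithin] with u (hu : 0 < u)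
    positivity
  · have : Tendsto (fun u : ℝ => u - Real.log (u + 1)) (𝓝 0) (𝓝 0) := by
      have : ContinuousAt (fun u : ℝ => u - Real.log (u + 1)) 0 := by fun_prop (disch := norm_num)
      simpa using this.tendsto
    exact this.mono_left nhdsWithin_le_nhds
  · have : Tendsto (fun u : ℝ => u ^ 2) (𝓝 0) (𝓝 0) := by
      simpa using (continuous_pow 2).tendsto (0:ℝ)
    exact this.mono_left nhdsWithin_le_nhds
  · have key : Tendsto (fun u : ℝ => 1 / (2 * (u + 1))) (𝓝[>] 0) (𝓝 (1/2)) := by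
      have : ContinuousAt (fun u : ℝ => 1 / (2 * (u + 1))) 0 := by fun_prop (disch := norm_num)
      simpa using this.tendsto.mono_left nhdsWithin_le_nhds
    refine key.congr' ?_
    filter_upwards [self_mem_nhdsWithin] with u (hu : 0 < u)
    have h1 : u + 1 ≠ 0 := by positivity
    field_simp
    ring

lemma L2 : Tendsto (fun u : ℝ => (u / (u + 1) - Real.log (u + 1)) / u ^ 2) (𝓝[>] 0)
    (𝓝 (-(1/2))) := by
  apply HasDerivAt.lhopital_zero_nhdsGT (f' := fun u => 1/(u+1)^2 - 1/(u+1))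
    (g' := fun u => 2*u)
  · filter_upwards [self_mem_nhdsWithin] with u (hu : 0 < u)
    have hne : u + 1 ≠ 0 := by positivity
    have h1 : HasDerivAt (fun u : ℝ => Real.log (u + 1)) (1/(u+1)) u := by
      have := (Real.hasDerivAt_log hne).comp u ((hasDerivAt_id u).add_const 1)
      simpa [one_div, Function.comp_def] using this
    have h2 : HasDerivAt (fun u : ℝ => u / (u + 1)) (1/(u+1)^2) u := by
      have := (hasDerivAt_id u).div ((hasDerivAt_id u).add_const 1) hne
      refine this.congr_deriv ?_
      simp only [id]; ring
    exact h2.sub h1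
  · filter_upwards with u
    simpa [mul_comm] using hasDerivAt_pow 2 u
  · filter_upwards [self_mem_nhdsWithin] with u (hu : 0 < u)
    positivity
  · have : ContinuousAt (fun u : ℝ => u / (u + 1) - Real.log (u + 1)) 0 := by
      fun_prop (disch := norm_num)
    have h2 : Tendsto (fun u : ℝ => u / (u + 1) - Real.log (u + 1)) (𝓝[>] 0)
        (𝓝 ((0:ℝ) / (0 + 1) - Real.log (0 + 1))) := this.tendsto.mono_left nhdsWithin_le_nhds
    simpa using h2
  · have : Tendsto (fun u : ℝ => u ^ 2) (𝓝 0) (𝓝 0) := by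
      simpa using (continuous_pow 2).tendsto (0:ℝ)
    exact this.mono_left nhdsWithin_le_nhds
  · have key : Tendsto (fun u : ℝ => -(1 / (2 * (u + 1)^2))) (𝓝[>] 0) (𝓝 (-(1/2))) := by
      have : ContinuousAt (fun u : ℝ => -(1 / (2 * (u + 1)^2))) 0 := by
        fun_prop (disch := norm_num)
      simpa using this.tendsto.mono_left nhdsWithin_le_nhds
    refine key.congr' ?_
    filter_upwards [self_mem_nhdsWithin] with u (hu : 0 < u)
    have h1 : u + 1 ≠ 0 := by positivity
    field_simp
    ring

theorem stmt_4 (N : ℕ) (hN : 1 ≤ N) (c : ℝ) (hc : 0 < c) :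
    Tendsto (fun P : ℝ => 1
        - lowerGamma N ((N : ℝ) * (1 + 1 / (c * P)) * Real.log (c * P + 1)) / Real.Gamma N
        + lowerGamma N ((N : ℝ) / (c * P) * Real.log (c * P + 1)) / Real.Gamma N)
      (nhdsWithin 0 (Set.Ioi 0)) (nhds 1)
    ∧ Tendsto (deriv (fun P : ℝ => 1
        - lowerGamma N ((N : ℝ) * (1 + 1 / (c * P)) * Real.log (c * P + 1)) / Real.Gamma N
        + lowerGamma N ((N : ℝ) / (c * P) * Real.log (c * P + 1)) / Real.Gamma N))
      (nhdsWithin 0 (Set.Ioi 0))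
      (nhds (-c * (N : ℝ) ^ N * Real.exp (-(N : ℝ)) / Real.Gamma N)) := by
  have hΓ : Real.Gamma N ≠ 0 := by
    have : (0:ℝ) < N := by exact_mod_cast hN
    exact ne_of_gt (Real.Gamma_pos_of_pos this)
  set Γ := Real.Gamma (N:ℝ) with hΓdef
  set F : ℝ → ℝ := fun x => lowerGamma N x with hF
  set g : ℝ → ℝ := fun x => Real.exp (-x) * x ^ (N - 1) with hg
  have hFd : ∀ x : ℝ, HasDerivAt F (g x) x := fun x => hasDerivAt_lowerGamma N hN x
  have hFc : Continuous F := by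
    rw [continuous_iff_continuousAt]
    exact fun x => (hFd x).differentiableAt.continuousAt
  set a : ℝ → ℝ := fun P => (N:ℝ) * (1 + 1/(c*P)) * Real.log (c*P+1) with ha
  set b : ℝ → ℝ := fun P => (N:ℝ)/(c*P) * Real.log (c*P+1) with hb
  -- the map P ↦ c*P sends 𝓝[>]0 to 𝓝[>]0
  have hmap : Tendsto (fun P : ℝ => c * P) (𝓝[>] 0) (𝓝[>] 0) := by
    apply tendsto_nhdsWithin_of_tendsto_nhds_of_eventually_within
    · have : Tendsto (fun P : ℝ => c * P) (𝓝 0) (𝓝 (c * 0)) :=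
        (continuous_const.mul continuous_id).tendsto 0
      simpa using this.mono_left nhdsWithin_le_nhds
    · filter_upwards [self_mem_nhdsWithin] with P (hP : 0 < P)
      exact mul_pos hc hP
  have Tlogdiv : Tendsto (fun P : ℝ => Real.log (c*P+1) / (c*P)) (𝓝[>] 0) (𝓝 1) :=
    L0.comp hmap
  have Tc1 : Tendsto (fun P : ℝ => c*P + 1) (𝓝[>] 0) (𝓝 1) := by
    have : Tendsto (fun P : ℝ => c*P + 1) (𝓝 0) (𝓝 (c*0+1)) :=
      ((continuous_const.mul continuous_id).add continuous_const).tendsto 0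
    simpa using this.mono_left nhdsWithin_le_nhds
  have Ta : Tendsto a (𝓝[>] 0) (𝓝 (N:ℝ)) := by
    have h1 : Tendsto (fun P : ℝ => (N:ℝ) * ((c*P+1) * (Real.log (c*P+1)/(c*P))))
        (𝓝[>] 0) (𝓝 ((N:ℝ) * (1 * 1))) :=
      tendsto_const_nhds.mul (Tc1.mul Tlogdiv)
    rw [show ((N:ℝ) * (1*1)) = (N:ℝ) by ring] at h1
    refine h1.congr' ?_
    filter_upwards [self_mem_nhdsWithin] with P (hP : 0 < P)
    have hcp : c*P ≠ 0 := ne_of_gt (mul_pos hc hP)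
    simp only [ha]
    field_simp
  have Tb : Tendsto b (𝓝[>] 0) (𝓝 (N:ℝ)) := by
    have h1 : Tendsto (fun P : ℝ => (N:ℝ) * (Real.log (c*P+1)/(c*P)))
        (𝓝[>] 0) (𝓝 ((N:ℝ) * 1)) := tendsto_const_nhds.mul Tlogdiv
    rw [mul_one] at h1
    refine h1.congr' ?_
    filter_upwards with P
    simp only [hb]
    ring
  constructor
  · have T1 : Tendsto (fun P : ℝ => 1 - F (a P)/Γ + F (b P)/Γ) (𝓝[>] 0)
        (𝓝 (1 - F (N:ℝ)/Γ + F (N:ℝ)/Γ)) := by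
      exact (tendsto_const_nhds.sub (((hFc.continuousAt.tendsto).comp Ta).div_const Γ)).add
        (((hFc.continuousAt.tendsto).comp Tb).div_const Γ)
    rw [show (1 - F (N:ℝ)/Γ + F (N:ℝ)/Γ) = 1 by ring] at T1
    exact T1
  · -- derivative part
    set D : ℝ → ℝ := fun P =>
      -(g (a P) * ((N:ℝ)*c * ((c*P - Real.log (c*P+1))/(c*P)^2)))/Γ
      + g (b P) * ((N:ℝ)*c * ((c*P/(c*P+1) - Real.log (c*P+1))/(c*P)^2))/Γ with hD
    have hderiv : ∀ P : ℝ, 0 < P →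
        HasDerivAt (fun P : ℝ => 1 - F (a P)/Γ + F (b P)/Γ) (D P) P := by
      intro P hP
      have hu0 : 0 < c*P := mul_pos hc hP
      have hu : c*P ≠ 0 := ne_of_gt hu0
      have hu1 : c*P + 1 ≠ 0 := by positivity
      have hcp : HasDerivAt (fun P : ℝ => c*P) c P := by
        simpa using (hasDerivAt_id P).const_mul c
      have hlog : HasDerivAt (fun P : ℝ => Real.log (c*P+1)) ((c*P+1)⁻¹ * c) P :=
        by have := (Real.hasDerivAt_log hu1).comp P (hcp.add_const 1); exact this
      have hone : HasDerivAt (fun P : ℝ => 1/(c*P)) ((0 * (c*P) - 1 * c)/(c*P)^2) P :=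
        (hasDerivAt_const P (1:ℝ)).div hcp hu
      have hinv := hone.const_add 1
      have hA := (hinv.const_mul (N:ℝ)).mul hlog
      have hq : HasDerivAt (fun P : ℝ => (N:ℝ)/(c*P)) ((0 * (c*P) - (N:ℝ) * c)/(c*P)^2) P :=
        (hasDerivAt_const P ((N:ℝ))).div hcp hu
      have hB := hq.mul hlog
      have hFa := (hFd (a P)).comp P hA
      have hFb := (hFd (b P)).comp P hB
      have hζ := ((hFa.div_const Γ).const_sub 1).add (hFb.div_const Γ)
      refine hζ.congr_deriv ?_
      simp only [hD]
      field_simp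
      ring
    have heq : deriv (fun P : ℝ => 1 - F (a P)/Γ + F (b P)/Γ) =ᶠ[𝓝[>] (0:ℝ)] D := by
      filter_upwards [self_mem_nhdsWithin] with P (hP : 0 < P)
      exact (hderiv P hP).deriv
    have hpow : (N:ℝ)^(N-1) * (N:ℝ) = (N:ℝ)^N := by
      rw [← pow_succ]
      congr 1
      omega
    have Tga : Tendsto (fun P => g (a P)) (𝓝[>] 0) (𝓝 (g (N:ℝ))) :=
      ((cont_g N).continuousAt.tendsto).comp Ta
    have Tgb : Tendsto (fun P => g (b P)) (𝓝[>] 0) (𝓝 (g (N:ℝ))) :=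
      ((cont_g N).continuousAt.tendsto).comp Tb
    have TL1 : Tendsto (fun P : ℝ => (c*P - Real.log (c*P+1))/(c*P)^2) (𝓝[>] 0)
        (𝓝 (1/2)) := L1.comp hmap
    have TL2 : Tendsto (fun P : ℝ => (c*P/(c*P+1) - Real.log (c*P+1))/(c*P)^2) (𝓝[>] 0)
        (𝓝 (-(1/2))) := L2.comp hmap
    have TD : Tendsto D (𝓝[>] 0)
        (𝓝 (-(g (N:ℝ) * ((N:ℝ)*c * (1/2)))/Γ + g (N:ℝ) * ((N:ℝ)*c * (-(1/2)))/Γ)) := by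
      exact (((Tga.mul (tendsto_const_nhds.mul TL1)).neg.div_const Γ)).add
        ((Tgb.mul (tendsto_const_nhds.mul TL2)).div_const Γ)
    have hval : -(g (N:ℝ) * ((N:ℝ)*c * (1/2)))/Γ + g (N:ℝ) * ((N:ℝ)*c * (-(1/2)))/Γ
        = -c * (N:ℝ)^N * Real.exp (-(N:ℝ)) / Γ := by
      simp only [hg]
      rw [← hpow]
      ring
    rw [hval] at TD
    exact TD.congr' heq.symm
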